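/- Hölder inequality in Lorentz spaces: if f ∈ L^{(p₁,q₁)}(ℝⁿ) and g ∈ L^{(p₂,q₂)}(ℝⁿ) with 1 < p₁, p₂ < ∞, 1 ≤ q₁, q₂ ≤ ∞, then fg ∈ L^{(r,s)}(ℝⁿ) where 1/r = 1/p₁ + 1/p₂ and 1/s = 1/q₁ + 1/q₂ (assuming r > 1 or appropriately interpreted), with ‖fg‖_{L^{(r,s)}} ≤ C ‖f‖_{L^{(p₁,q₁)}} ‖g‖_{L^{(p₂,q₂)}}. -/

import Mathlib

open MeasureTheory Set
open scoped ENNReal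

/-- The decreasing rearrangement of `f` (`ℝ≥0∞`-valued). -/
noncomputable def rearrangement {n : ℕ} (f : EuclideanSpace ℝ (Fin n) → ℝ) (t : ℝ) : ℝ≥0∞ :=
  sInf {s : ℝ≥0∞ |
    volume {x : EuclideanSpace ℝ (Fin n) | s < (‖f x‖₊ : ℝ≥0∞)} ≤ ENNReal.ofReal t}

/-- The Lorentz `L^{(p,q)}` (quasi-)norm, defined via the decreasing rearrangement:
`(∫₀^∞ (t^{1/p} f*(t))^q dt/t)^{1/q}` for `q < ∞`, and `sup_{t>0} t^{1/p} f*(t)` for `q = ∞`. -/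
noncomputable def lorentzNorm {n : ℕ} (p : ℝ) (q : ℝ≥0∞)
    (f : EuclideanSpace ℝ (Fin n) → ℝ) : ℝ≥0∞ :=
  if q = ⊤ then ⨆ t ∈ Ioi (0:ℝ), ENNReal.ofReal (t ^ (1/p)) * rearrangement f t
  else (∫⁻ t in Ioi (0:ℝ),
      (ENNReal.ofReal (t ^ (1/p)) * rearrangement f t) ^ q.toReal / ENNReal.ofReal t) ^
      (1 / q.toReal)

lemma rearrangement_antitone {n : ℕ} (f : EuclideanSpace ℝ (Fin n) → ℝ) :
    Antitone (rearrangement f) := by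
  intro t₁ t₂ h
  exact sInf_le_sInf fun s hs => le_trans hs (ENNReal.ofReal_le_ofReal h)

@[fun_prop] lemma measurable_rearrangement {n : ℕ} (f : EuclideanSpace ℝ (Fin n) → ℝ) :
    Measurable (rearrangement f) :=
  (rearrangement_antitone f).measurable

lemma dist_rearrangement_le {n : ℕ} (f : EuclideanSpace ℝ (Fin n) → ℝ) (t : ℝ) :
    volume {x : EuclideanSpace ℝ (Fin n) | rearrangement f t < (‖f x‖₊ : ℝ≥0∞)} ≤
      ENNReal.ofReal t := by
  set S : Set ℝ≥0∞ :=
    {s : ℝ≥0∞ | volume {x : EuclideanSpace ℝ (Fin n) | s < (‖f x‖₊ : ℝ≥0∞)} ≤ ENNReal.ofReal t}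
    with hS
  have hSne : (⊤ : ℝ≥0∞) ∈ S := by
    simp only [hS, mem_setOf_eq]
    have : {x : EuclideanSpace ℝ (Fin n) | (⊤:ℝ≥0∞) < (‖f x‖₊ : ℝ≥0∞)} = ∅ := by
      ext x; simp [not_top_lt]
    simp [this]
  have hmem : ∀ b : ℝ≥0∞, sInf S < b → b ∈ S := by
    intro b hb
    obtain ⟨a, haS, hab⟩ := sInf_lt_iff.mp hb
    refine le_trans (measure_mono ?_) haS
    intro x hx
    exact lt_of_le_of_lt hab.le hx
  have hset : {x : EuclideanSpace ℝ (Fin n) | rearrangement f t < (‖f x‖₊ : ℝ≥0∞)} =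
      ⋃ q : {q : ℚ // rearrangement f t < ((q:ℝ).toNNReal : ℝ≥0∞)},
        {x : EuclideanSpace ℝ (Fin n) | (((q:ℚ):ℝ).toNNReal : ℝ≥0∞) < (‖f x‖₊ : ℝ≥0∞)} := by
    ext x
    simp only [mem_setOf_eq, mem_iUnion]
    constructor
    · intro hx
      obtain ⟨q, _, h1, h2⟩ := ENNReal.lt_iff_exists_rat_btwn.mp hx
      exact ⟨⟨q, h1⟩, h2⟩
    · rintro ⟨⟨q, hq⟩, hx⟩
      exact hq.trans hx
  rw [show rearrangement f t = sInf S from rfl] at hset ⊢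
  rw [hset]
  have hdir : Directed (fun x1 x2 => x1 ⊆ x2)
      (fun q : {q : ℚ // sInf S < ((q:ℝ).toNNReal : ℝ≥0∞)} =>
        {x : EuclideanSpace ℝ (Fin n) | (((q:ℚ):ℝ).toNNReal : ℝ≥0∞) < (‖f x‖₊ : ℝ≥0∞)}) := by
    rintro ⟨q₁, h₁⟩ ⟨q₂, h₂⟩
    refine ⟨⟨min q₁ q₂, ?_⟩, ?_, ?_⟩
    · rcases le_total q₁ q₂ with h | h
      · rw [min_eq_left h]; exact h₁
      · rw [min_eq_right h]; exact h₂
    · intro x hx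
      simp only [mem_setOf_eq] at hx ⊢
      refine lt_of_le_of_lt ?_ hx
      exact ENNReal.coe_le_coe.mpr (Real.toNNReal_mono (by exact_mod_cast min_le_left q₁ q₂))
    · intro x hx
      simp only [mem_setOf_eq] at hx ⊢
      refine lt_of_le_of_lt ?_ hx
      exact ENNReal.coe_le_coe.mpr (Real.toNNReal_mono (by exact_mod_cast min_le_right q₁ q₂))
  rw [hdir.measure_iUnion]
  exact iSup_le fun q => hmem _ q.2

lemma rearrangement_mul_le {n : ℕ} (f g : EuclideanSpace ℝ (Fin n) → ℝ)
    {t₁ t₂ : ℝ} (ht₁ : 0 ≤ t₁) (ht₂ : 0 ≤ t₂) :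
    rearrangement (fun x => f x * g x) (t₁ + t₂) ≤
      rearrangement f t₁ * rearrangement g t₂ := by
  apply sInf_le
  simp only [mem_setOf_eq]
  have hsub : {x : EuclideanSpace ℝ (Fin n) |
      rearrangement f t₁ * rearrangement g t₂ < (‖f x * g x‖₊ : ℝ≥0∞)} ⊆
      {x | rearrangement f t₁ < (‖f x‖₊ : ℝ≥0∞)} ∪
      {x | rearrangement g t₂ < (‖g x‖₊ : ℝ≥0∞)} := by
    intro x hx
    simp only [mem_setOf_eq, mem_union] at hx ⊢
    by_contra hc
    push_neg at hc
    obtain ⟨h1, h2⟩ := hc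
    apply absurd hx
    push_neg
    calc (‖f x * g x‖₊ : ℝ≥0∞) = (‖f x‖₊ : ℝ≥0∞) * (‖g x‖₊ : ℝ≥0∞) := by
          rw [nnnorm_mul]; exact_mod_cast rfl
      _ ≤ rearrangement f t₁ * rearrangement g t₂ := mul_le_mul' h1 h2
  calc volume {x : EuclideanSpace ℝ (Fin n) |
      rearrangement f t₁ * rearrangement g t₂ < (‖f x * g x‖₊ : ℝ≥0∞)}
      ≤ volume ({x | rearrangement f t₁ < (‖f x‖₊ : ℝ≥0∞)} ∪
        {x | rearrangement g t₂ < (‖g x‖₊ : ℝ≥0∞)}) := measure_mono hsub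
    _ ≤ volume {x : EuclideanSpace ℝ (Fin n) | rearrangement f t₁ < (‖f x‖₊ : ℝ≥0∞)}
        + volume {x : EuclideanSpace ℝ (Fin n) | rearrangement g t₂ < (‖g x‖₊ : ℝ≥0∞)} :=
        measure_union_le _ _
    _ ≤ ENNReal.ofReal t₁ + ENNReal.ofReal t₂ :=
        add_le_add (dist_rearrangement_le f t₁) (dist_rearrangement_le g t₂)
    _ = ENNReal.ofReal (t₁ + t₂) := (ENNReal.ofReal_add ht₁ ht₂).symm

lemma lintegral_Ioi_comp_two_mul (F : ℝ → ℝ≥0∞) (hF : Measurable F) :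
    ∫⁻ t in Ioi (0:ℝ), F t = 2 * ∫⁻ u in Ioi (0:ℝ), F (2 * u) := by
  have h2 : (2:ℝ) ≠ 0 := two_ne_zero
  have hpre : (fun u : ℝ => 2 * u) ⁻¹' (Ioi 0) = Ioi 0 := by
    ext u; simp [mem_Ioi]
  have hmap : Measure.map (fun u : ℝ => 2 * u) (volume.restrict (Ioi 0)) =
      (ENNReal.ofReal (1/2)) • volume.restrict (Ioi 0) := by
    rw [← hpre, ← Measure.restrict_map (measurable_const_mul 2) measurableSet_Ioi,
      Real.map_volume_mul_left h2, hpre]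
    rw [Measure.restrict_smul]
    norm_num
  have := lintegral_map hF (measurable_const_mul (2:ℝ)) (μ := volume.restrict (Ioi 0))
  rw [hmap, lintegral_smul_measure, smul_eq_mul] at this
  rw [← this, ← mul_assoc]
  rw [show (2:ℝ≥0∞) * ENNReal.ofReal (1/2) = 1 by
    rw [show ((2:ℝ≥0∞)) = ENNReal.ofReal 2 by simp, ← ENNReal.ofReal_mul (by norm_num)]
    norm_num]
  rw [one_mul]

lemma pointwise_bound {n : ℕ} (f g : EuclideanSpace ℝ (Fin n) → ℝ)
    {p₁ p₂ r : ℝ} (hr : 1/r = 1/p₁ + 1/p₂) {t : ℝ} (ht : 0 < t) :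
    ENNReal.ofReal ((2*t) ^ (1/r)) * rearrangement (fun x => f x * g x) (2*t) ≤
      ENNReal.ofReal (2 ^ (1/r)) *
        (ENNReal.ofReal (t ^ (1/p₁)) * rearrangement f t) *
        (ENNReal.ofReal (t ^ (1/p₂)) * rearrangement g t) := by
  have h1 : rearrangement (fun x => f x * g x) (2*t) ≤
      rearrangement f t * rearrangement g t := by
    rw [two_mul]; exact rearrangement_mul_le f g ht.le ht.le
  have h2 : (2*t) ^ (1/r) = 2^(1/r) * (t^(1/p₁) * t^(1/p₂)) := by
    rw [Real.mul_rpow (by norm_num) ht.le, hr, Real.rpow_add ht]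
  calc ENNReal.ofReal ((2*t) ^ (1/r)) * rearrangement (fun x => f x * g x) (2*t)
      ≤ ENNReal.ofReal ((2*t) ^ (1/r)) * (rearrangement f t * rearrangement g t) :=
        mul_le_mul_right h1 _
    _ = ENNReal.ofReal (2 ^ (1/r)) *
        (ENNReal.ofReal (t ^ (1/p₁)) * rearrangement f t) *
        (ENNReal.ofReal (t ^ (1/p₂)) * rearrangement g t) := by
        rw [h2, ENNReal.ofReal_mul (Real.rpow_nonneg (by norm_num) _),
          ENNReal.ofReal_mul (Real.rpow_nonneg ht.le _)]
        ring

/-- Hölder inequality in Lorentz spaces: if `f ∈ L^{(p₁,q₁)}` and `g ∈ L^{(p₂,q₂)}` with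
`1 < p₁, p₂ < ∞`, `1 ≤ q₁, q₂ ≤ ∞`, then `fg ∈ L^{(r,s)}` where `1/r = 1/p₁ + 1/p₂` and
`1/s = 1/q₁ + 1/q₂`, with `‖fg‖_{(r,s)} ≤ C ‖f‖_{(p₁,q₁)} ‖g‖_{(p₂,q₂)}`. -/
theorem stmt_6 (n : ℕ) (hn : 1 ≤ n) (p₁ p₂ : ℝ) (q₁ q₂ : ℝ≥0∞)
    (hp₁ : 1 < p₁) (hp₂ : 1 < p₂) (hq₁ : 1 ≤ q₁) (hq₂ : 1 ≤ q₂)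
    (r : ℝ) (s : ℝ≥0∞) (hr : 1/r = 1/p₁ + 1/p₂) (hr1 : 1 < r)
    (hs : s⁻¹ = q₁⁻¹ + q₂⁻¹) :
    ∃ C : ℝ≥0∞, 0 < C ∧ C ≠ ⊤ ∧
      ∀ f g : EuclideanSpace ℝ (Fin n) → ℝ, Measurable f → Measurable g →
        lorentzNorm r s (fun x => f x * g x) ≤
          C * lorentzNorm p₁ q₁ f * lorentzNorm p₂ q₂ g := by
  refine ⟨ENNReal.ofReal (2 ^ (1/r)), ENNReal.ofReal_pos.mpr (Real.rpow_pos_of_pos two_pos _),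
    ENNReal.ofReal_ne_top, ?_⟩
  intro f g hf hg
  set c : ℝ≥0∞ := ENNReal.ofReal (2 ^ (1/r)) with hc
  by_cases hstop : s = ⊤
  · -- then q₁ = q₂ = ⊤
    have hq : q₁ = ⊤ ∧ q₂ = ⊤ := by
      rw [hstop] at hs
      simp only [ENNReal.inv_top] at hs
      constructor
      · exact ENNReal.inv_eq_zero.mp (by
          have := (add_eq_zero.mp hs.symm).1; exact this)
      · exact ENNReal.inv_eq_zero.mp (add_eq_zero.mp hs.symm).2
    obtain ⟨h1, h2⟩ := hq
    subst h1 h2 hstop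
    simp only [lorentzNorm, reduceIte]
    apply iSup₂_le
    intro t ht
    have ht2 : 0 < t/2 := by simpa using (mem_Ioi.mp ht)
    have key := pointwise_bound f g hr ht2
    rw [show 2*(t/2) = t by ring] at key
    refine key.trans ?_
    exact mul_le_mul'
      (mul_le_mul_right
        (le_biSup (fun t => ENNReal.ofReal (t ^ (1/p₁)) * rearrangement f t)
          (mem_Ioi.mpr ht2)) c)
      (le_biSup (fun t => ENNReal.ofReal (t ^ (1/p₂)) * rearrangement g t)
        (mem_Ioi.mpr ht2))
  · -- s ≠ ⊤ : integral case
    have hq₁0 : q₁ ≠ 0 := fun h => by simp [h] at hq₁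
    have hq₂0 : q₂ ≠ 0 := fun h => by simp [h] at hq₂
    have hs0 : s ≠ 0 := by
      intro h
      rw [h] at hs
      simp only [ENNReal.inv_zero] at hs
      have h1 : q₁⁻¹ ≤ 1 := ENNReal.inv_le_one.mpr hq₁
      have h2 : q₂⁻¹ ≤ 1 := ENNReal.inv_le_one.mpr hq₂
      have htop : (⊤:ℝ≥0∞) ≤ 1 + 1 := hs ▸ add_le_add h1 h2
      simp at htop
    set σ : ℝ := s.toReal with hσdef
    have hσ : 0 < σ := ENNReal.toReal_pos hs0 hstop
    set A : ℝ → ℝ≥0∞ := fun t => ENNReal.ofReal (t ^ (1/p₁)) * rearrangement f t with hA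
    set B : ℝ → ℝ≥0∞ := fun t => ENNReal.ofReal (t ^ (1/p₂)) * rearrangement g t with hB
    set D : ℝ → ℝ≥0∞ := fun u => (A u)^σ * (B u)^σ / ENNReal.ofReal u with hD
    have hmA : Measurable A := by fun_prop
    have hmB : Measurable B := by fun_prop
    have hmD : Measurable D := by fun_prop
    have hrpowinv : ∀ x : ℝ≥0∞, (x ^ σ) ^ (1/σ) = x := by
      intro x
      rw [← ENNReal.rpow_mul, mul_one_div_cancel hσ.ne', ENNReal.rpow_one]
    -- the substitution and pointwise bound
    set I : ℝ≥0∞ := ∫⁻ t in Ioi (0:ℝ),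
      (ENNReal.ofReal (t ^ (1/r)) * rearrangement (fun x => f x * g x) t) ^ σ /
        ENNReal.ofReal t with hI
    set K : ℝ≥0∞ := ∫⁻ u in Ioi (0:ℝ), D u with hK
    have hIK : I ≤ c ^ σ * K := by
      have hmI : Measurable fun t =>
          (ENNReal.ofReal (t ^ (1/r)) * rearrangement (fun x => f x * g x) t) ^ σ /
            ENNReal.ofReal t := by fun_prop
      rw [hI, lintegral_Ioi_comp_two_mul _ hmI]
      have hpt : ∀ u ∈ Ioi (0:ℝ),
          (ENNReal.ofReal ((2*u) ^ (1/r)) * rearrangement (fun x => f x * g x) (2*u)) ^ σ /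
            ENNReal.ofReal (2*u) ≤ (2⁻¹ * c ^ σ) * D u := by
        intro u hu
        have hu0 : 0 < u := mem_Ioi.mp hu
        have hnum := pointwise_bound f g hr hu0
        have h1 : (ENNReal.ofReal ((2*u) ^ (1/r)) *
            rearrangement (fun x => f x * g x) (2*u)) ^ σ ≤
            c ^ σ * ((A u)^σ * (B u)^σ) := by
          calc (ENNReal.ofReal ((2*u) ^ (1/r)) *
              rearrangement (fun x => f x * g x) (2*u)) ^ σ
              ≤ (c * A u * B u) ^ σ := ENNReal.rpow_le_rpow hnum hσ.le
            _ = c ^ σ * ((A u)^σ * (B u)^σ) := by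
                rw [ENNReal.mul_rpow_of_nonneg _ _ hσ.le,
                  ENNReal.mul_rpow_of_nonneg _ _ hσ.le, mul_assoc]
        have h2 : ENNReal.ofReal (2*u) = 2 * ENNReal.ofReal u := by
          rw [ENNReal.ofReal_mul (by norm_num)]
          norm_num
        calc (ENNReal.ofReal ((2*u) ^ (1/r)) *
            rearrangement (fun x => f x * g x) (2*u)) ^ σ / ENNReal.ofReal (2*u)
            ≤ (c ^ σ * ((A u)^σ * (B u)^σ)) / ENNReal.ofReal (2*u) :=
              ENNReal.div_le_div_right h1 _
          _ = (2⁻¹ * c ^ σ) * D u := by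
              simp only [h2, hD]
              rw [div_eq_mul_inv, div_eq_mul_inv,
                ENNReal.mul_inv (Or.inl two_ne_zero) (Or.inl ENNReal.ofNat_ne_top)]
              ring
      calc 2 * ∫⁻ u in Ioi (0:ℝ),
          (ENNReal.ofReal ((2*u) ^ (1/r)) * rearrangement (fun x => f x * g x) (2*u)) ^ σ /
            ENNReal.ofReal (2*u)
          ≤ 2 * ∫⁻ u in Ioi (0:ℝ), (2⁻¹ * c ^ σ) * D u :=
            mul_le_mul_right (setLIntegral_mono (by fun_prop) hpt) 2
        _ = 2 * ((2⁻¹ * c ^ σ) * K) := by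
            rw [lintegral_const_mul'' _ hmD.aemeasurable]
        _ = c ^ σ * K := by
            rw [← mul_assoc, ← mul_assoc, ENNReal.mul_inv_cancel two_ne_zero ENNReal.ofNat_ne_top,
              one_mul]
    have hLHS : lorentzNorm r s (fun x => f x * g x) ≤ (c ^ σ * K) ^ (1/σ) := by
      rw [lorentzNorm, if_neg hstop, ← hσdef]
      exact ENNReal.rpow_le_rpow ((le_of_eq hI.symm).trans hIK) (by positivity)
    rcases eq_or_ne q₁ ⊤ with hq₁top | hq₁top
    · -- q₁ = ⊤, q₂ = s
      have hq₂top : q₂ ≠ ⊤ := by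
        intro h
        apply hstop
        rw [← inv_inv s, hs, hq₁top, h]
        simp
      have hseq : q₂ = s := by
        rw [← inv_inv q₂, ← inv_inv s, hs, hq₁top]
        simp
      set N₁ : ℝ≥0∞ := ⨆ t ∈ Ioi (0:ℝ), A t with hN₁
      set I₂ : ℝ≥0∞ := ∫⁻ u in Ioi (0:ℝ), (B u)^σ / ENNReal.ofReal u with hI₂
      have hKb : K ≤ N₁ ^ σ * I₂ := by
        calc K ≤ ∫⁻ u in Ioi (0:ℝ), N₁ ^ σ * ((B u)^σ / ENNReal.ofReal u) := by
              apply setLIntegral_mono (by fun_prop)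
              intro u hu
              simp only [hD]
              rw [mul_div_assoc]
              exact mul_le_mul_left (ENNReal.rpow_le_rpow (le_biSup A hu) hσ.le) _
          _ = N₁ ^ σ * I₂ := lintegral_const_mul'' _ (by fun_prop)
      have hfin : (c ^ σ * K) ^ (1/σ) ≤ c * N₁ * I₂ ^ (1/σ) := by
        calc (c ^ σ * K) ^ (1/σ) ≤ (c ^ σ * (N₁ ^ σ * I₂)) ^ (1/σ) :=
              ENNReal.rpow_le_rpow (mul_le_mul_right hKb _) (by positivity)
          _ = c * N₁ * I₂ ^ (1/σ) := by
              rw [ENNReal.mul_rpow_of_nonneg _ _ (by positivity),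
                ENNReal.mul_rpow_of_nonneg _ _ (by positivity), hrpowinv, hrpowinv, mul_assoc]
      refine hLHS.trans (hfin.trans_eq ?_)
      simp only [lorentzNorm, if_pos hq₁top, if_neg hq₂top, hN₁, hI₂, hA, hB, hσdef, hseq]
      rw [if_neg hstop]
    rcases eq_or_ne q₂ ⊤ with hq₂top | hq₂top
    · -- q₂ = ⊤, q₁ = s
      have hseq : q₁ = s := by
        rw [← inv_inv q₁, ← inv_inv s, hs, hq₂top]
        simp
      set N₂ : ℝ≥0∞ := ⨆ t ∈ Ioi (0:ℝ), B t with hN₂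
      set I₁ : ℝ≥0∞ := ∫⁻ u in Ioi (0:ℝ), (A u)^σ / ENNReal.ofReal u with hI₁
      have hKb : K ≤ N₂ ^ σ * I₁ := by
        calc K ≤ ∫⁻ u in Ioi (0:ℝ), N₂ ^ σ * ((A u)^σ / ENNReal.ofReal u) := by
              apply setLIntegral_mono (by fun_prop)
              intro u hu
              simp only [hD]
              rw [mul_comm ((A u)^σ) ((B u)^σ), mul_div_assoc]
              exact mul_le_mul_left (ENNReal.rpow_le_rpow (le_biSup B hu) hσ.le) _
          _ = N₂ ^ σ * I₁ := lintegral_const_mul'' _ (by fun_prop)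
      have hfin : (c ^ σ * K) ^ (1/σ) ≤ c * I₁ ^ (1/σ) * N₂ := by
        calc (c ^ σ * K) ^ (1/σ) ≤ (c ^ σ * (N₂ ^ σ * I₁)) ^ (1/σ) :=
              ENNReal.rpow_le_rpow (mul_le_mul_right hKb _) (by positivity)
          _ = c * I₁ ^ (1/σ) * N₂ := by
              rw [ENNReal.mul_rpow_of_nonneg _ _ (by positivity),
                ENNReal.mul_rpow_of_nonneg _ _ (by positivity), hrpowinv, hrpowinv]
              ring
      refine hLHS.trans (hfin.trans_eq ?_)
      simp only [lorentzNorm, if_pos hq₂top, if_neg hq₁top, hN₂, hI₁, hA, hB, hσdef, hseq]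
      rw [if_neg hstop]
    · -- both finite : Hölder
      set σ₁ : ℝ := q₁.toReal with hσ₁def
      set σ₂ : ℝ := q₂.toReal with hσ₂def
      have hσ₁ : 0 < σ₁ := ENNReal.toReal_pos hq₁0 hq₁top
      have hσ₂ : 0 < σ₂ := ENNReal.toReal_pos hq₂0 hq₂top
      have hreal : σ⁻¹ = σ₁⁻¹ + σ₂⁻¹ := by
        have := congrArg ENNReal.toReal hs
        rwa [ENNReal.toReal_add (ENNReal.inv_ne_top.mpr hq₁0) (ENNReal.inv_ne_top.mpr hq₂0),
          ENNReal.toReal_inv, ENNReal.toReal_inv, ENNReal.toReal_inv] at this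
      have hσltσ₁ : σ < σ₁ := by
        have h2 : 0 < σ₂⁻¹ := inv_pos.mpr hσ₂
        have h3 : σ₁⁻¹ < σ⁻¹ := by rw [hreal]; linarith
        by_contra hcon
        push_neg at hcon
        have := inv_anti₀ hσ₁ hcon
        linarith
      have hconj : (σ₁/σ).HolderConjugate (σ₂/σ) := by
        refine Real.holderConjugate_iff.mpr ⟨?_, ?_⟩
        · rw [lt_div_iff₀ hσ]; linarith
        · rw [inv_div, inv_div]
          field_simp
          field_simp at hreal
          linarith [hreal]
      set I₁ : ℝ≥0∞ := ∫⁻ u in Ioi (0:ℝ), (A u)^σ₁ / ENNReal.ofReal u with hI₁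
      set I₂ : ℝ≥0∞ := ∫⁻ u in Ioi (0:ℝ), (B u)^σ₂ / ENNReal.ofReal u with hI₂
      set U : ℝ → ℝ≥0∞ := fun u => ((A u)^σ₁ / ENNReal.ofReal u) ^ (σ/σ₁) with hU
      set V : ℝ → ℝ≥0∞ := fun u => ((B u)^σ₂ / ENNReal.ofReal u) ^ (σ/σ₂) with hV
      have hDeq : ∀ u ∈ Ioi (0:ℝ), D u = U u * V u := by
        intro u hu
        have hu0 : 0 < u := mem_Ioi.mp hu
        have hx0 : ENNReal.ofReal u ≠ 0 := by
          simp [ENNReal.ofReal_eq_zero]; linarith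
        set y : ℝ≥0∞ := (ENNReal.ofReal u)⁻¹ with hy
        have hy0 : y ≠ 0 := by simp [hy]
        have hyt : y ≠ ⊤ := by simp [hy, hx0]
        have hUeq : U u = (A u) ^ σ * y ^ (σ/σ₁) := by
          rw [hU]
          simp only []
          rw [div_eq_mul_inv, ← hy, ENNReal.mul_rpow_of_nonneg _ _ (by positivity),
            ← ENNReal.rpow_mul]
          congr 2
          field_simp
        have hVeq : V u = (B u) ^ σ * y ^ (σ/σ₂) := by
          rw [hV]
          simp only []
          rw [div_eq_mul_inv, ← hy, ENNReal.mul_rpow_of_nonneg _ _ (by positivity),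
            ← ENNReal.rpow_mul]
          congr 2
          field_simp
        have hysum : y ^ (σ/σ₁) * y ^ (σ/σ₂) = y := by
          rw [← ENNReal.rpow_add _ _ hy0 hyt]
          have : σ/σ₁ + σ/σ₂ = 1 := by
            field_simp
            field_simp at hreal
            linarith [hreal]
          rw [this, ENNReal.rpow_one]
        rw [hD]
        simp only []
        rw [hUeq, hVeq, div_eq_mul_inv, ← hy,
          show A u ^ σ * y ^ (σ/σ₁) * (B u ^ σ * y ^ (σ/σ₂)) =
            A u ^ σ * B u ^ σ * (y ^ (σ/σ₁) * y ^ (σ/σ₂)) from by ring, hysum]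
      have hKeq : K = ∫⁻ u in Ioi (0:ℝ), U u * V u := by
        rw [hK]
        exact setLIntegral_congr_fun measurableSet_Ioi hDeq
      have hholder : K ≤ I₁ ^ (σ/σ₁) * I₂ ^ (σ/σ₂) := by
        rw [hKeq]
        have h := ENNReal.lintegral_mul_le_Lp_mul_Lq (volume.restrict (Ioi (0:ℝ))) hconj
          (Measurable.aemeasurable (by fun_prop : Measurable U))
          (Measurable.aemeasurable (by fun_prop : Measurable V))
        simp only [Pi.mul_apply] at h
        refine h.trans (le_of_eq ?_)
        have hUpow : ∀ u : ℝ, U u ^ (σ₁/σ) = (A u)^σ₁ / ENNReal.ofReal u := by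
          intro u
          rw [hU]
          simp only []
          rw [← ENNReal.rpow_mul]
          rw [show σ/σ₁ * (σ₁/σ) = 1 by field_simp, ENNReal.rpow_one]
        have hVpow : ∀ u : ℝ, V u ^ (σ₂/σ) = (B u)^σ₂ / ENNReal.ofReal u := by
          intro u
          rw [hV]
          simp only []
          rw [← ENNReal.rpow_mul]
          rw [show σ/σ₂ * (σ₂/σ) = 1 by field_simp, ENNReal.rpow_one]
        simp only [hUpow, hVpow, hI₁, hI₂, one_div_div]
      have hfin : (c ^ σ * K) ^ (1/σ) ≤ c * I₁ ^ (1/σ₁) * I₂ ^ (1/σ₂) := by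
        calc (c ^ σ * K) ^ (1/σ) ≤ (c ^ σ * (I₁ ^ (σ/σ₁) * I₂ ^ (σ/σ₂))) ^ (1/σ) :=
              ENNReal.rpow_le_rpow (mul_le_mul_right hholder _) (by positivity)
          _ = c * I₁ ^ (1/σ₁) * I₂ ^ (1/σ₂) := by
              rw [ENNReal.mul_rpow_of_nonneg _ _ (by positivity),
                ENNReal.mul_rpow_of_nonneg _ _ (by positivity), hrpowinv,
                ← ENNReal.rpow_mul, ← ENNReal.rpow_mul,
                show σ/σ₁ * (1/σ) = 1/σ₁ by field_simp,
                show σ/σ₂ * (1/σ) = 1/σ₂ by field_simp, mul_assoc]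
      refine hLHS.trans (hfin.trans_eq ?_)
      simp only [lorentzNorm, if_neg hq₁top, if_neg hq₂top, hI₁, hI₂, hA, hB, hσ₁def, hσ₂def]
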